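/- Let (a_ℓ)_{ℓ≥1} be nonnegative reals with ∑_{ℓ=1}^∞ log(ℓ+e)·a_ℓ ≤ C for a constant C > 0, and let μ > 0. Define y(k) = kμ·log(1 - 1/(k+e)) + ∑_{ℓ=1}^∞ log(1 + ℓ/(k+e))·a_ℓ for k ≥ 1. Then there exist δ > 0 and K ∈ ℕ such that y(k) ≤ -2δ + C for all k ≥ 1 and y(k) ≤ -δ for all k > K. -/

import Mathlib

theorem drift_bound (a : ℕ → ℝ) (C μ : ℝ) (hC : 0 < C) (hμ : 0 < μ)
    (ha : ∀ ℓ, 1 ≤ ℓ → 0 ≤ a ℓ)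
    (hsum : Summable (fun ℓ : ℕ => Real.log ((ℓ + 1 : ℕ) + Real.exp 1) * a (ℓ + 1)))
    (hC' : ∑' ℓ : ℕ, Real.log ((ℓ + 1 : ℕ) + Real.exp 1) * a (ℓ + 1) ≤ C)
    (y : ℕ → ℝ)
    (hy : ∀ k : ℕ, 1 ≤ k →
      y k = (k : ℝ) * μ * Real.log (1 - 1 / (k + Real.exp 1)) +
        ∑' ℓ : ℕ, Real.log (1 + ((ℓ + 1 : ℕ) : ℝ) / (k + Real.exp 1)) * a (ℓ + 1)) :
    ∃ δ : ℝ, 0 < δ ∧ ∃ K : ℕ,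
      (∀ k : ℕ, 1 ≤ k → y k ≤ -2 * δ + C) ∧
      (∀ k : ℕ, K < k → y k ≤ -δ) := by
  have he1 : (1:ℝ) ≤ Real.exp 1 := Real.one_le_exp (by norm_num)
  have he1' : (1:ℝ) < Real.exp 1 := by linarith [Real.add_one_le_exp 1]
  have he3 : Real.exp 1 < 3 := by
    have := Real.exp_one_lt_d9; linarith
  set e : ℝ := Real.exp 1 with hedef
  -- termwise bounds
  have hke : ∀ k : ℕ, (1:ℝ) ≤ (k:ℝ) + e := fun k => by
    have : (0:ℝ) ≤ (k:ℝ) := Nat.cast_nonneg k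
    linarith
  have hterm_nonneg : ∀ (k ℓ : ℕ),
      0 ≤ Real.log (1 + ((ℓ + 1 : ℕ) : ℝ) / ((k:ℝ) + e)) * a (ℓ + 1) := by
    intro k ℓ
    apply mul_nonneg
    · apply Real.log_nonneg
      have : (0:ℝ) ≤ ((ℓ + 1 : ℕ) : ℝ) / ((k:ℝ) + e) :=
        div_nonneg (Nat.cast_nonneg _) (by linarith [hke k])
      linarith
    · exact ha _ (Nat.le_add_left 1 ℓ)
  have hterm_le : ∀ (k ℓ : ℕ),
      Real.log (1 + ((ℓ + 1 : ℕ) : ℝ) / ((k:ℝ) + e)) * a (ℓ + 1)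
        ≤ Real.log ((ℓ + 1 : ℕ) + e) * a (ℓ + 1) := by
    intro k ℓ
    apply mul_le_mul_of_nonneg_right _ (ha _ (Nat.le_add_left 1 ℓ))
    apply Real.log_le_log
    · have : (0:ℝ) ≤ ((ℓ + 1 : ℕ) : ℝ) / ((k:ℝ) + e) :=
        div_nonneg (Nat.cast_nonneg _) (by linarith [hke k])
      linarith
    · have h1 : ((ℓ + 1 : ℕ) : ℝ) / ((k:ℝ) + e) ≤ ((ℓ + 1 : ℕ) : ℝ) :=
        div_le_self (Nat.cast_nonneg _) (hke k)
      have : ((ℓ + 1 : ℕ) : ℝ) ≥ 0 := Nat.cast_nonneg _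
      linarith
  have hsummable : ∀ k : ℕ,
      Summable (fun ℓ : ℕ => Real.log (1 + ((ℓ + 1 : ℕ) : ℝ) / ((k:ℝ) + e)) * a (ℓ + 1)) :=
    fun k => Summable.of_nonneg_of_le (hterm_nonneg k) (hterm_le k) hsum
  -- the tail sum S k
  set S : ℕ → ℝ := fun k => ∑' ℓ : ℕ, Real.log (1 + ((ℓ + 1 : ℕ) : ℝ) / ((k:ℝ) + e)) * a (ℓ + 1)
    with hSdef
  have hSleC : ∀ k : ℕ, S k ≤ C := by
    intro k
    calc S k ≤ ∑' ℓ : ℕ, Real.log ((ℓ + 1 : ℕ) + e) * a (ℓ + 1) :=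
          Summable.tsum_le_tsum (hterm_le k) (hsummable k) hsum
      _ ≤ C := hC'
  -- S tends to 0
  have hStend : Filter.Tendsto S Filter.atTop (nhds 0) := by
    have h0 : (0:ℝ) = ∑' ℓ : ℕ, (0:ℝ) := by simp
    rw [hSdef, h0]
    apply tendsto_tsum_of_dominated_convergence hsum
    · intro ℓ
      have h1 : Filter.Tendsto (fun k : ℕ => ((ℓ + 1 : ℕ) : ℝ) / ((k:ℝ) + e))
          Filter.atTop (nhds 0) := by
        apply Filter.Tendsto.div_atTop tendsto_const_nhds
        exact Filter.tendsto_atTop_add_const_right _ e tendsto_natCast_atTop_atTop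
      have h2 : Filter.Tendsto (fun k : ℕ => 1 + ((ℓ + 1 : ℕ) : ℝ) / ((k:ℝ) + e))
          Filter.atTop (nhds 1) := by
        simpa using h1.const_add 1
      have h3 : Filter.Tendsto (fun k : ℕ => Real.log (1 + ((ℓ + 1 : ℕ) : ℝ) / ((k:ℝ) + e)))
          Filter.atTop (nhds 0) := by
        have := (Real.continuousAt_log (by norm_num : (1:ℝ) ≠ 0)).tendsto.comp h2
        simpa [Function.comp_def] using this
      simpa using h3.mul_const (a (ℓ + 1))
    · filter_upwards with k ℓ
      rw [Real.norm_eq_abs, abs_of_nonneg (hterm_nonneg k ℓ)]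
      exact hterm_le k ℓ
  -- first term bound
  have hfirst : ∀ k : ℕ, ((k:ℝ)) * μ * Real.log (1 - 1 / ((k:ℝ) + e))
      ≤ -((k:ℝ) * μ / ((k:ℝ) + e)) := by
    intro k
    have hpos : (0:ℝ) < (k:ℝ) + e := lt_of_lt_of_le one_pos (hke k)
    have hlt : 1 / ((k:ℝ) + e) < 1 := by
      rw [div_lt_one hpos]
      have : (0:ℝ) ≤ (k:ℝ) := Nat.cast_nonneg k
      linarith [he1']
    have hx : (0:ℝ) < 1 - 1 / ((k:ℝ) + e) := by linarith
    have hlog : Real.log (1 - 1 / ((k:ℝ) + e)) ≤ -(1 / ((k:ℝ) + e)) := by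
      have := Real.log_le_sub_one_of_pos hx
      linarith
    have hkm : (0:ℝ) ≤ (k:ℝ) * μ := mul_nonneg (Nat.cast_nonneg k) hμ.le
    calc ((k:ℝ)) * μ * Real.log (1 - 1 / ((k:ℝ) + e))
        ≤ ((k:ℝ)) * μ * (-(1 / ((k:ℝ) + e))) := mul_le_mul_of_nonneg_left hlog hkm
      _ = -((k:ℝ) * μ / ((k:ℝ) + e)) := by ring
  -- choose δ
  set δ : ℝ := μ / (2 * (1 + e)) with hδdef
  have hδpos : 0 < δ := by
    apply div_pos hμ; nlinarith
  have hδlt : δ < μ / 2 := by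
    rw [hδdef, div_lt_div_iff₀ (by nlinarith) (by norm_num)]
    nlinarith
  -- get K₀ from tendsto
  have hε : ∀ᶠ k in Filter.atTop, S k < μ / 2 - δ :=
    hStend.eventually_lt_const (by linarith)
  obtain ⟨K₀, hK₀⟩ := Filter.eventually_atTop.mp hε
  refine ⟨δ, hδpos, max K₀ 3, ?_, ?_⟩
  · intro k hk
    rw [hy k hk]
    have h1 : ((k:ℝ)) * μ * Real.log (1 - 1 / ((k:ℝ) + e)) ≤ -(2 * δ) := by
      refine le_trans (hfirst k) ?_
      have hpos : (0:ℝ) < (k:ℝ) + e := lt_of_lt_of_le one_pos (hke k)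
      have hk1 : (1:ℝ) ≤ (k:ℝ) := by exact_mod_cast hk
      have hne : (1:ℝ) + e ≠ 0 := by positivity
      have : 2 * δ = μ / (1 + e) := by rw [hδdef]; field_simp
      rw [this, neg_le_neg_iff, div_le_div_iff₀ (by nlinarith) hpos]
      nlinarith [mul_nonneg (sub_nonneg.mpr hk1) (mul_pos hμ (show (0:ℝ) < e by linarith)).le]
    have h2 : S k ≤ C := hSleC k
    have : y k = y k := rfl
    calc ((k:ℝ)) * μ * Real.log (1 - 1 / ((k:ℝ) + e)) + S k ≤ -(2*δ) + C := add_le_add h1 h2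
      _ = -2 * δ + C := by ring
  · intro k hk
    have hk3 : 3 < k := lt_of_le_of_lt (le_max_right K₀ 3) hk
    have hk1 : 1 ≤ k := by omega
    rw [hy k hk1]
    have hkK₀ : K₀ ≤ k := le_of_lt (lt_of_le_of_lt (le_max_left K₀ 3) hk)
    have hS : S k < μ / 2 - δ := hK₀ k hkK₀
    have h1 : ((k:ℝ)) * μ * Real.log (1 - 1 / ((k:ℝ) + e)) ≤ -(μ / 2) := by
      refine le_trans (hfirst k) ?_
      have hpos : (0:ℝ) < (k:ℝ) + e := lt_of_lt_of_le one_pos (hke k)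
      have hkr : (3:ℝ) < (k:ℝ) := by exact_mod_cast hk3
      rw [neg_le_neg_iff, div_le_div_iff₀ (by norm_num) hpos]
      nlinarith
    calc ((k:ℝ)) * μ * Real.log (1 - 1 / ((k:ℝ) + e)) + S k
        ≤ -(μ/2) + (μ/2 - δ) := add_le_add h1 hS.le
      _ = -δ := by ring
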